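/- arXiv:1912.09560 — 3 statements merged into one kernel-verified Lean document; each statement's English description precedes it below -/
import Mathlib

section
/- Half-normal stochastic representation of the GLMGA distribution: for all σ, a, b > 0, let μ be the product of the standard half-normal measure on ℝ (density √(2/π)·e^{-x²/2} on (0,∞)) and the Gamma(a, 1) measure on ℝ. Then for every t > 0, μ{ (x, y) : (y/(b x²))^σ ≤ t } = 1 − I_{1/2,a}( t^{-1/σ}/(t^{-1/σ} + 2b) ); that is, if X is standard half-normal and Y ~ Gamma(a,1) are independent, then (Y/(bX²))^σ follows the GLMGA(σ,a,b) distribution. -/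
open MeasureTheory Real Filter Topology

/-- The (real) beta function `B(m,n) = ∫_0^1 t^(m-1) (1-t)^(n-1) dt`. -/
noncomputable def betaFn (m n : ℝ) : ℝ :=
  ∫ t in (0:ℝ)..1, t ^ (m - 1) * (1 - t) ^ (n - 1)

/-- The regularized incomplete beta function `I_{m,n}(v)`. -/
noncomputable def regIncBeta (m n v : ℝ) : ℝ :=
  (∫ t in (0:ℝ)..v, t ^ (m - 1) * (1 - t) ^ (n - 1)) / betaFn m n

/-- The GLMGA density `f_{σ,a,b}`. -/
noncomputable def glmga (σ a b y : ℝ) : ℝ :=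
  (2 * b) ^ a / (σ * betaFn a (1 / 2)) * y ^ (-(1 / (2 * σ) + 1))
    / (y ^ (-1 / σ) + 2 * b) ^ (a + 1 / 2)

/-- The standard half-normal measure on `ℝ`, with density `√(2/π) e^(-x²/2)` on `(0,∞)`. -/
noncomputable def halfNormalMeasure : Measure ℝ :=
  volume.withDensity fun x =>
    ENNReal.ofReal (if 0 < x then Real.sqrt (2 / π) * Real.exp (-x ^ 2 / 2) else 0)

section Aux


lemma lintegral_image_eq_lintegral_abs_deriv_mul' {s : Set ℝ} {f f' : ℝ → ℝ}
    (hs : MeasurableSet s) (hf' : ∀ x ∈ s, HasDerivWithinAt f (f' x) s x)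
    (hf : Set.InjOn f s) (g : ℝ → ENNReal) :
    ∫⁻ x in f '' s, g x = ∫⁻ x in s, ENNReal.ofReal |f' x| * g (f x) := by
  simpa only [ContinuousLinearMap.det_toSpanSingleton] using
    MeasureTheory.lintegral_image_eq_lintegral_abs_det_fderiv_mul volume hs
      (fun x hx => (hf' x hx).hasFDerivWithinAt) hf g

lemma sub_sqrt (g : ℝ → ENNReal) :
    ∫⁻ x in Set.Ioi (0:ℝ), g x
      = ∫⁻ u in Set.Ioi (0:ℝ), ENNReal.ofReal (Real.sqrt (2*u))⁻¹ * g (Real.sqrt (2*u)) := by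
  have himg : (fun u : ℝ => Real.sqrt (2*u)) '' Set.Ioi 0 = Set.Ioi 0 := by
    ext x; simp only [Set.mem_image, Set.mem_Ioi]
    constructor
    · rintro ⟨u, hu, rfl⟩; exact Real.sqrt_pos.mpr (by linarith)
    · intro hx
      refine ⟨x^2/2, by positivity, ?_⟩
      rw [mul_div_cancel₀ _ (two_ne_zero)]
      exact Real.sqrt_sq hx.le
  conv_lhs => rw [← himg]
  rw [lintegral_image_eq_lintegral_abs_deriv_mul' measurableSet_Ioi
    (f' := fun u => (Real.sqrt (2*u))⁻¹) ?_ ?_ g]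
  · apply setLIntegral_congr_fun measurableSet_Ioi
    intro u hu
    dsimp only
    have hu' : (0:ℝ) < u := hu
    rw [abs_of_pos (inv_pos.mpr (Real.sqrt_pos.mpr (by linarith)))]
  · intro u hu
    have hu' : (0:ℝ) < u := hu
    have h2u : (0:ℝ) < 2*u := by linarith
    have := (Real.hasDerivAt_sqrt h2u.ne').comp u ((hasDerivAt_id u).const_mul 2)
    simp only [Function.comp_def] at this
    exact (this.congr_deriv (by ring)).hasDerivWithinAt
  · intro u hu w hw h
    have hu' : (0:ℝ) < u := hu
    have hw' : (0:ℝ) < w := hw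
    have h' : Real.sqrt (2*u) = Real.sqrt (2*w) := h
    have e1 : Real.sqrt (2*u) ^ 2 = 2*u := Real.sq_sqrt (by linarith)
    have e2 : Real.sqrt (2*w) ^ 2 = 2*w := Real.sq_sqrt (by linarith)
    have : (2:ℝ)*u = 2*w := by rw [← e1, ← e2, h']
    linarith

lemma sub_scale {y q : ℝ} (hy : 0 < y) (hq : 0 < q) (g : ℝ → ENNReal) :
    ∫⁻ u in Set.Ici (y*q), g u = ∫⁻ s in Set.Ici q, ENNReal.ofReal y * g (y*s) := by
  have himg : (fun s : ℝ => y*s) '' Set.Ici q = Set.Ici (y*q) := by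
    ext u; simp only [Set.mem_image, Set.mem_Ici]
    constructor
    · rintro ⟨s, hs, rfl⟩; exact mul_le_mul_of_nonneg_left hs hy.le
    · intro hu; exact ⟨u/y, (le_div_iff₀' hy).mpr hu, by field_simp⟩
  rw [← himg, lintegral_image_eq_lintegral_abs_deriv_mul' measurableSet_Ici
    (f' := fun _ => y) (fun s _ => by
      simpa using ((hasDerivAt_id s).const_mul y).hasDerivWithinAt)
    (fun s _ w _ h => mul_left_cancel₀ hy.ne' h) g]
  apply setLIntegral_congr_fun measurableSet_Ici
  intro s hs
  rw [abs_of_pos hy]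

lemma sub_inv {q : ℝ} (hq : 0 < q) (g : ℝ → ENNReal) :
    ∫⁻ s in Set.Ici q, g s
      = ∫⁻ w in Set.Ioc (0:ℝ) (1/(1+q)), ENNReal.ofReal ((w^2)⁻¹) * g (w⁻¹ - 1) := by
  have h1q : (0:ℝ) < 1 + q := by linarith
  have himg : (fun w : ℝ => w⁻¹ - 1) '' Set.Ioc 0 (1/(1+q)) = Set.Ici q := by
    ext s; simp only [Set.mem_image, Set.mem_Ioc, Set.mem_Ici]
    constructor
    · rintro ⟨w, ⟨hw0, hw1⟩, rfl⟩
      have : 1 + q ≤ w⁻¹ := by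
        rw [le_inv_comm₀ h1q hw0]
        simpa [one_div] using hw1
      linarith
    · intro hs
      have h1s : (0:ℝ) < 1 + s := by linarith
      refine ⟨(1+s)⁻¹, ⟨by positivity, ?_⟩, by field_simp; ring⟩
      rw [one_div]
      exact inv_anti₀ h1q (by linarith)
  rw [← himg, lintegral_image_eq_lintegral_abs_deriv_mul' measurableSet_Ioc
    (f' := fun w => -((w^2)⁻¹)) ?_ ?_ g]
  · apply setLIntegral_congr_fun measurableSet_Ioc
    intro w hw
    dsimp only
    rw [abs_neg, abs_of_pos (inv_pos.mpr (pow_pos hw.1 2))]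
  · intro w hw
    exact ((hasDerivAt_inv (ne_of_gt hw.1)).sub_const 1).hasDerivWithinAt
  · intro w hw z hz h
    have h2 : w⁻¹ = z⁻¹ := by linarith
    exact inv_injective h2

lemma sub_reflect (v : ℝ) (g : ℝ → ENNReal) :
    ∫⁻ w in Set.Ioc (0:ℝ) (1 - v), g w = ∫⁻ x in Set.Ico v 1, g (1 - x) := by
  have himg : (fun x : ℝ => 1 - x) '' Set.Ico v 1 = Set.Ioc 0 (1-v) := by
    ext w
    simp only [Set.mem_image, Set.mem_Ico, Set.mem_Ioc]
    constructor
    · rintro ⟨x, hx, rfl⟩; exact ⟨by linarith [hx.2], by linarith [hx.1]⟩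
    · intro hw; exact ⟨1 - w, ⟨by linarith [hw.2], by linarith [hw.1]⟩, by ring⟩
  rw [← himg, lintegral_image_eq_lintegral_abs_deriv_mul' measurableSet_Ico
    (f := fun x : ℝ => 1 - x) (f' := fun _ => -1)
    (fun x _ => by simpa using ((hasDerivAt_id x).const_sub 1).hasDerivWithinAt)
    (fun x _ z _ h => by dsimp at h; linarith) g]
  apply setLIntegral_congr_fun measurableSet_Ico
  intro x hx
  norm_num


lemma lintegral_gamma_aux {p : ℝ} (hp : 0 < p) :
    ∫⁻ z in Set.Ioi (0:ℝ), ENNReal.ofReal (z ^ (p - 1) * Real.exp (-z))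
      = ENNReal.ofReal (Real.Gamma p) := by
  rw [Real.Gamma_eq_integral hp,
    ← MeasureTheory.ofReal_integral_eq_lintegral_ofReal]
  · congr 1
    apply setIntegral_congr_fun measurableSet_Ioi
    intro x hx; ring
  · exact (Real.GammaIntegral_convergent hp).congr_fun (fun x hx => by ring) measurableSet_Ioi
  · filter_upwards [ae_restrict_mem measurableSet_Ioi] with x hx
    exact mul_nonneg (Real.rpow_nonneg (le_of_lt hx) _) (Real.exp_nonneg _)

lemma lintegral_gamma_scaled {p l : ℝ} (hp : 0 < p) (hl : 0 < l) :
    ∫⁻ y in Set.Ioi (0:ℝ), ENNReal.ofReal (y ^ (p - 1) * Real.exp (-(l * y)))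
      = ENNReal.ofReal (Real.Gamma p * l ^ (-p)) := by
  have himg : (fun z => z / l) '' Set.Ioi (0:ℝ) = Set.Ioi 0 := by
    ext y; simp only [Set.mem_image, Set.mem_Ioi]
    constructor
    · rintro ⟨z, hz, rfl⟩; positivity
    · intro hy; exact ⟨y * l, by positivity, by field_simp⟩
  calc ∫⁻ y in Set.Ioi (0:ℝ), ENNReal.ofReal (y ^ (p - 1) * Real.exp (-(l * y)))
      = ∫⁻ y in (fun z => z / l) '' Set.Ioi (0:ℝ),
          ENNReal.ofReal (y ^ (p - 1) * Real.exp (-(l * y))) := by rw [himg]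
    _ = ∫⁻ z in Set.Ioi (0:ℝ), ENNReal.ofReal |1 / l|
          * ENNReal.ofReal ((z / l) ^ (p - 1) * Real.exp (-(l * (z / l)))) := by
        apply lintegral_image_eq_lintegral_abs_deriv_mul' measurableSet_Ioi
        · intro x hx
          simpa using (hasDerivAt_id x).div_const l |>.hasDerivWithinAt
        · intro x _ y _ h
          field_simp at h; exact h
    _ = ∫⁻ z in Set.Ioi (0:ℝ), ENNReal.ofReal (l ^ (-p) * (z ^ (p - 1) * Real.exp (-z))) := by
        apply setLIntegral_congr_fun measurableSet_Ioi
        intro z hz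
        dsimp only
        rw [← ENNReal.ofReal_mul (by positivity)]
        congr 1
        rw [abs_of_pos (by positivity), Real.div_rpow hz.le hl.le]
        rw [mul_div_cancel₀ _ hl.ne']
        rw [Real.rpow_neg hl.le, Real.rpow_sub hl, Real.rpow_one]
        field_simp
    _ = ENNReal.ofReal (l ^ (-p)) * ∫⁻ z in Set.Ioi (0:ℝ),
          ENNReal.ofReal (z ^ (p - 1) * Real.exp (-z)) := by
        simp_rw [ENNReal.ofReal_mul (by positivity : (0:ℝ) ≤ l ^ (-p))]
        exact lintegral_const_mul' _ _ ENNReal.ofReal_ne_top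
    _ = ENNReal.ofReal (Real.Gamma p * l ^ (-p)) := by
        rw [lintegral_gamma_aux hp, ← ENNReal.ofReal_mul (by positivity), mul_comm]

section
variable {a c : ℝ}

lemma step3 (ha : 0 < a) (hc : 0 < c) :
    ∫⁻ u in Set.Ioi (0:ℝ),
        ENNReal.ofReal (u ^ (-(1/2):ℝ) * Real.exp (-u))
          * ∫⁻ y in Set.Ioc (0:ℝ) (2*c*u), ENNReal.ofReal (y ^ (a-1) * Real.exp (-y))
      = ∫⁻ y in Set.Ioi (0:ℝ),
          ENNReal.ofReal (y ^ (a-1) * Real.exp (-y))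
            * ∫⁻ u in Set.Ici (y * (1/(2*c))), ENNReal.ofReal (u ^ (-(1/2):ℝ) * Real.exp (-u)) := by
  set W : ℝ × ℝ → ENNReal := fun p =>
    Set.indicator {q : ℝ × ℝ | 0 < q.2 ∧ q.2 ≤ 2*c*q.1}
      (fun q => ENNReal.ofReal (q.1 ^ (-(1/2):ℝ) * Real.exp (-q.1))
        * ENNReal.ofReal (q.2 ^ (a-1) * Real.exp (-q.2))) p with hW
  have hWmeas : Measurable W := by
    apply Measurable.indicator
    · fun_prop
    · have : {q : ℝ × ℝ | 0 < q.2 ∧ q.2 ≤ 2*c*q.1}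
          = {q : ℝ × ℝ | 0 < q.2} ∩ {q : ℝ × ℝ | q.2 ≤ 2*c*q.1} := rfl
      rw [this]
      exact (measurableSet_lt measurable_const measurable_snd).inter
        (measurableSet_le measurable_snd (measurable_fst.const_mul _))
  have hleft : ∀ u : ℝ, u ∈ Set.Ioi (0:ℝ) →
      ENNReal.ofReal (u ^ (-(1/2):ℝ) * Real.exp (-u))
          * ∫⁻ y in Set.Ioc (0:ℝ) (2*c*u), ENNReal.ofReal (y ^ (a-1) * Real.exp (-y))
        = ∫⁻ y, W (u, y) := by
    intro u _
    have : (fun y => W (u, y)) = Set.indicator (Set.Ioc (0:ℝ) (2*c*u))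
        (fun y => ENNReal.ofReal (u ^ (-(1/2):ℝ) * Real.exp (-u))
          * ENNReal.ofReal (y ^ (a-1) * Real.exp (-y))) := by
      funext y
      simp only [hW, Set.indicator_apply, Set.mem_setOf_eq, Set.mem_Ioc]
    rw [this, lintegral_indicator measurableSet_Ioc,
      lintegral_const_mul' _ _ ENNReal.ofReal_ne_top]
  have hright : ∀ y : ℝ, y ∈ Set.Ioi (0:ℝ) →
      ENNReal.ofReal (y ^ (a-1) * Real.exp (-y))
          * ∫⁻ u in Set.Ici (y * (1/(2*c))), ENNReal.ofReal (u ^ (-(1/2):ℝ) * Real.exp (-u))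
        = ∫⁻ u in Set.Ioi (0:ℝ), W (u, y) := by
    intro y hy
    have hy' : (0:ℝ) < y := hy
    have h2c : (0:ℝ) < 2*c := by linarith
    have hyq : 0 < y * (1/(2*c)) := by positivity
    have hfun : (fun u => W (u, y)) = Set.indicator (Set.Ici (y * (1/(2*c))))
        (fun u => ENNReal.ofReal (u ^ (-(1/2):ℝ) * Real.exp (-u))
          * ENNReal.ofReal (y ^ (a-1) * Real.exp (-y))) := by
      funext u
      simp only [hW, Set.indicator_apply, Set.mem_setOf_eq, Set.mem_Ici]
      have : (0 < y ∧ y ≤ 2*c*u) ↔ (y * (1/(2*c)) ≤ u) := by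
        rw [mul_one_div, div_le_iff₀ h2c]
        constructor
        · rintro ⟨-, h⟩; linarith
        · intro h; exact ⟨hy', by linarith⟩
      exact if_congr this rfl rfl
    have hss : Set.Ici (y * (1/(2*c))) ∩ Set.Ioi (0:ℝ) = Set.Ici (y * (1/(2*c))) :=
      Set.inter_eq_left.mpr (fun u hu => lt_of_lt_of_le hyq hu)
    rw [hfun, lintegral_indicator measurableSet_Ici, Measure.restrict_restrict measurableSet_Ici,
      hss, lintegral_mul_const' _ _ ENNReal.ofReal_ne_top, mul_comm]
  calc ∫⁻ u in Set.Ioi (0:ℝ),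
        ENNReal.ofReal (u ^ (-(1/2):ℝ) * Real.exp (-u))
          * ∫⁻ y in Set.Ioc (0:ℝ) (2*c*u), ENNReal.ofReal (y ^ (a-1) * Real.exp (-y))
      = ∫⁻ u in Set.Ioi (0:ℝ), ∫⁻ y, W (u, y) := by
        exact setLIntegral_congr_fun measurableSet_Ioi hleft
    _ = ∫⁻ y, ∫⁻ u in Set.Ioi (0:ℝ), W (u, y) := by
        exact lintegral_lintegral_swap hWmeas.aemeasurable
    _ = ∫⁻ y, Set.indicator (Set.Ioi (0:ℝ))
          (fun y => ∫⁻ u in Set.Ioi (0:ℝ), W (u, y)) y := by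
        apply lintegral_congr
        intro y
        rw [Set.indicator_apply]
        split_ifs with hy
        · rfl
        · have : ∀ u, W (u, y) = 0 := by
            intro u
            apply Set.indicator_of_notMem
            simp only [Set.mem_setOf_eq, not_and]
            intro h0y
            exact absurd h0y (by simpa using hy)
          simp only [this, lintegral_zero]
    _ = ∫⁻ y in Set.Ioi (0:ℝ), ∫⁻ u in Set.Ioi (0:ℝ), W (u, y) := by
        rw [lintegral_indicator measurableSet_Ioi]
    _ = ∫⁻ y in Set.Ioi (0:ℝ),
          ENNReal.ofReal (y ^ (a-1) * Real.exp (-y))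
            * ∫⁻ u in Set.Ici (y * (1/(2*c))), ENNReal.ofReal (u ^ (-(1/2):ℝ) * Real.exp (-u)) := by
        exact setLIntegral_congr_fun measurableSet_Ioi
          (fun y hy => (hright y hy).symm)

end

section
variable {a q : ℝ}

lemma hkey1 {a y s : ℝ} (hy : 0 < y) (hs : 0 < s) :
    y ^ (a-1) * Real.exp (-y) * (y * ((y*s) ^ (-(1/2):ℝ) * Real.exp (-(y*s))))
      = y ^ (a + 1/2 - 1) * Real.exp (-((1+s)*y)) * s ^ (-(1/2):ℝ) := by
  have e : y ^ (a + 1/2 - 1) = y ^ (a-1) * y * y ^ (-(1/2):ℝ) := by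
    rw [show (a + 1/2 - 1) = (a-1) + 1 + (-(1/2)) by ring, Real.rpow_add hy,
      Real.rpow_add hy, Real.rpow_one]
  rw [e, Real.mul_rpow hy.le hs.le, show -((1+s)*y) = -y + -(y*s) by ring, Real.exp_add]
  ring

lemma step456 (ha : 0 < a) (hq : 0 < q) :
    ∫⁻ y in Set.Ioi (0:ℝ),
        ENNReal.ofReal (y ^ (a-1) * Real.exp (-y))
          * ∫⁻ u in Set.Ici (y * q), ENNReal.ofReal (u ^ (-(1/2):ℝ) * Real.exp (-u))
      = ENNReal.ofReal (Real.Gamma (a + 1/2))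
          * ∫⁻ s in Set.Ici q, ENNReal.ofReal (s ^ (-(1/2):ℝ) * (1+s) ^ (-(a + 1/2))) := by
  have hp : (0:ℝ) < a + 1/2 := by linarith
  calc ∫⁻ y in Set.Ioi (0:ℝ),
        ENNReal.ofReal (y ^ (a-1) * Real.exp (-y))
          * ∫⁻ u in Set.Ici (y * q), ENNReal.ofReal (u ^ (-(1/2):ℝ) * Real.exp (-u))
      = ∫⁻ y in Set.Ioi (0:ℝ), ∫⁻ s in Set.Ici q,
          ENNReal.ofReal (y ^ (a + 1/2 - 1) * Real.exp (-((1+s)*y)))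
            * ENNReal.ofReal (s ^ (-(1/2):ℝ)) := by
        apply setLIntegral_congr_fun measurableSet_Ioi
        intro y hy
        dsimp only
        have hy' : (0:ℝ) < y := hy
        rw [sub_scale hy' hq, ← lintegral_const_mul' _ _ ENNReal.ofReal_ne_top]
        apply setLIntegral_congr_fun measurableSet_Ici
        intro s hs
        dsimp only
        have hs' : (0:ℝ) < s := lt_of_lt_of_le hq hs
        rw [← ENNReal.ofReal_mul (by positivity), ← ENNReal.ofReal_mul (by positivity),
          ← ENNReal.ofReal_mul (by positivity)]
        congr 1
        exact hkey1 hy' hs'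
    _ = ∫⁻ s in Set.Ici q, ∫⁻ y in Set.Ioi (0:ℝ),
          ENNReal.ofReal (y ^ (a + 1/2 - 1) * Real.exp (-((1+s)*y)))
            * ENNReal.ofReal (s ^ (-(1/2):ℝ)) := by
        apply lintegral_lintegral_swap
        apply Measurable.aemeasurable
        fun_prop
    _ = ∫⁻ s in Set.Ici q, ENNReal.ofReal (Real.Gamma (a + 1/2))
          * ENNReal.ofReal (s ^ (-(1/2):ℝ) * (1+s) ^ (-(a + 1/2))) := by
        apply setLIntegral_congr_fun measurableSet_Ici
        intro s hs
        dsimp only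
        have hs' : (0:ℝ) < s := lt_of_lt_of_le hq hs
        have h1s : (0:ℝ) < 1 + s := by linarith
        rw [lintegral_mul_const' _ _ ENNReal.ofReal_ne_top, lintegral_gamma_scaled hp h1s,
          ← ENNReal.ofReal_mul (by positivity), ← ENNReal.ofReal_mul (by positivity)]
        congr 1
        ring
    _ = ENNReal.ofReal (Real.Gamma (a + 1/2))
          * ∫⁻ s in Set.Ici q, ENNReal.ofReal (s ^ (-(1/2):ℝ) * (1+s) ^ (-(a + 1/2))) := by
        rw [lintegral_const_mul' _ _ ENNReal.ofReal_ne_top]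

end

lemma hkey2 {a w : ℝ} (hw : 0 < w) (hw1 : w < 1) :
    (w^2)⁻¹ * ((w⁻¹ - 1) ^ (-(1/2):ℝ) * (1 + (w⁻¹ - 1)) ^ (-(a + 1/2)))
      = w ^ (a-1) * (1-w) ^ (-(1/2):ℝ) := by
  have h1w : (0:ℝ) < 1 - w := by linarith
  have e2 : 1 + (w⁻¹ - 1) = w⁻¹ := by ring
  have e1 : w⁻¹ - 1 = (1-w) * w⁻¹ := by field_simp
  rw [e2, e1, Real.mul_rpow h1w.le (inv_nonneg.mpr hw.le)]
  rw [Real.inv_rpow hw.le, Real.inv_rpow hw.le]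
  rw [← Real.rpow_neg hw.le, ← Real.rpow_neg hw.le]
  have hpow2 : (w^2)⁻¹ = w ^ (-2:ℝ) := by
    rw [← Real.rpow_natCast w 2, ← Real.rpow_neg hw.le]
    norm_num
  rw [hpow2]
  rw [show (a - 1) = -2 + (-(-(1/2)) + -(-(a + 1/2))) by ring]
  rw [Real.rpow_add hw, Real.rpow_add hw]
  ring

lemma step78 {a q : ℝ} (hq : 0 < q) :
    ∫⁻ s in Set.Ici q, ENNReal.ofReal (s ^ (-(1/2):ℝ) * (1+s) ^ (-(a + 1/2)))
      = ∫⁻ x in Set.Ico (1 - 1/(1+q)) 1,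
          ENNReal.ofReal (x ^ ((1:ℝ)/2 - 1) * (1-x) ^ (a-1)) := by
  have h1q : (0:ℝ) < 1 + q := by linarith
  have hvq : 1/(1+q) < 1 := by
    rw [div_lt_one h1q]; linarith
  have hvq0 : 0 < 1/(1+q) := by positivity
  rw [sub_inv hq]
  have hIoc : ∫⁻ w in Set.Ioc (0:ℝ) (1/(1+q)),
      ENNReal.ofReal ((w^2)⁻¹) * ENNReal.ofReal ((w⁻¹ - 1) ^ (-(1/2):ℝ)
        * (1 + (w⁻¹ - 1)) ^ (-(a + 1/2)))
      = ∫⁻ w in Set.Ioc (0:ℝ) (1/(1+q)),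
          ENNReal.ofReal (w ^ (a-1) * (1-w) ^ (-(1/2):ℝ)) := by
    apply setLIntegral_congr_fun measurableSet_Ioc
    intro w hw
    dsimp only
    rw [← ENNReal.ofReal_mul (by positivity)]
    congr 1
    exact hkey2 hw.1 (lt_of_le_of_lt hw.2 hvq)
  rw [hIoc]
  conv_lhs => rw [show (1:ℝ)/(1+q) = 1 - (1 - 1/(1+q)) by ring,
    sub_reflect (1 - 1/(1+q)) (fun w => ENNReal.ofReal (w ^ (a-1) * (1-w) ^ (-(1/2):ℝ)))]
  apply setLIntegral_congr_fun measurableSet_Ico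
  intro x hx
  dsimp only
  congr 1
  rw [show (1:ℝ) - (1-x) = x by ring, show ((1:ℝ)/2 - 1) = (-(1/2):ℝ) by norm_num]
  ring

lemma hkey0 {u : ℝ} (hu' : 0 < u) :
    (Real.sqrt (2*u))⁻¹ * (Real.sqrt (2/π) * Real.exp (-(2*u)/2))
      = (Real.sqrt π)⁻¹ * (u ^ (-(1/2):ℝ) * Real.exp (-u)) := by
  have hπ : (0:ℝ) < π := Real.pi_pos
  have h1 : Real.sqrt (2*u) = Real.sqrt 2 * Real.sqrt u := Real.sqrt_mul (by norm_num) u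
  have h2 : Real.sqrt (2/π) = Real.sqrt 2 / Real.sqrt π := Real.sqrt_div (by norm_num) π
  have h3 : u ^ (-(1/2):ℝ) = (Real.sqrt u)⁻¹ := by
    rw [Real.rpow_neg hu'.le, Real.sqrt_eq_rpow]
  have h4 : Real.exp (-(2*u)/2) = Real.exp (-u) := by rw [show -(2*u)/2 = -u by ring]
  have hs2 : (0:ℝ) < Real.sqrt 2 := Real.sqrt_pos.mpr (by norm_num)
  have hsu : (0:ℝ) < Real.sqrt u := Real.sqrt_pos.mpr hu'
  have hsπ : (0:ℝ) < Real.sqrt π := Real.sqrt_pos.mpr hπ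
  rw [h1, h2, h3, h4]
  field_simp

lemma step2 {c : ℝ} (Φ : ℝ → ENNReal) :
    ∫⁻ x in Set.Ioi (0:ℝ),
        ENNReal.ofReal (Real.sqrt (2/π) * Real.exp (-x^2/2)) * Φ (c * x^2)
      = ENNReal.ofReal (Real.sqrt π)⁻¹
          * ∫⁻ u in Set.Ioi (0:ℝ),
              ENNReal.ofReal (u ^ (-(1/2):ℝ) * Real.exp (-u)) * Φ (2*c*u) := by
  rw [sub_sqrt (fun x => ENNReal.ofReal (Real.sqrt (2/π) * Real.exp (-x^2/2)) * Φ (c * x^2)),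
    ← lintegral_const_mul' _ _ ENNReal.ofReal_ne_top]
  apply setLIntegral_congr_fun measurableSet_Ioi
  intro u hu
  have hu' : (0:ℝ) < u := hu
  have hsq : Real.sqrt (2*u) ^ 2 = 2*u := Real.sq_sqrt (by linarith)
  simp only [hsq]
  rw [← mul_assoc, ← ENNReal.ofReal_mul (inv_nonneg.mpr (Real.sqrt_nonneg _))]
  rw [show ENNReal.ofReal (Real.sqrt π)⁻¹
        * (ENNReal.ofReal (u ^ (-(1/2):ℝ) * Real.exp (-u)) * Φ (2*c*u))
      = ENNReal.ofReal ((Real.sqrt π)⁻¹ * (u ^ (-(1/2):ℝ) * Real.exp (-u))) * Φ (2*c*u) from by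
    rw [← mul_assoc, ← ENNReal.ofReal_mul (inv_nonneg.mpr (Real.sqrt_nonneg _))]]
  congr 2
  · exact hkey0 hu'
  · ring




lemma beta_integrand_cast {m n x : ℝ} (hx : 0 ≤ x) (hx1 : x ≤ 1) :
    ((x ^ (m - 1) * (1 - x) ^ (n - 1) : ℝ) : ℂ)
      = (x : ℂ) ^ ((m : ℂ) - 1) * (1 - (x : ℂ)) ^ ((n : ℂ) - 1) := by
  have h1x : (0:ℝ) ≤ 1 - x := by linarith
  rw [Complex.ofReal_mul, Complex.ofReal_cpow hx, Complex.ofReal_cpow h1x]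
  push_cast
  ring_nf

lemma betaFn_complex {m n : ℝ} : (betaFn m n : ℂ) = Complex.betaIntegral m n := by
  rw [betaFn, ← intervalIntegral.integral_ofReal, Complex.betaIntegral]
  apply intervalIntegral.integral_congr
  intro x hx
  rw [Set.uIcc_of_le (by norm_num : (0:ℝ) ≤ 1)] at hx
  exact beta_integrand_cast hx.1 hx.2

lemma Gamma_mul_Gamma_eq_betaFn {m n : ℝ} (hm : 0 < m) (hn : 0 < n) :
    Real.Gamma m * Real.Gamma n = Real.Gamma (m + n) * betaFn m n := by
  have h := Complex.Gamma_mul_Gamma_eq_betaIntegral (s := (m:ℂ)) (t := (n:ℂ))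
    (by simpa using hm) (by simpa using hn)
  rw [← betaFn_complex] at h
  have : ((m:ℂ) + n) = ((m + n : ℝ) : ℂ) := by push_cast; ring
  rw [this, Complex.Gamma_ofReal, Complex.Gamma_ofReal, Complex.Gamma_ofReal] at h
  exact_mod_cast h

lemma betaFn_pos {m n : ℝ} (hm : 0 < m) (hn : 0 < n) : 0 < betaFn m n := by
  have h := Gamma_mul_Gamma_eq_betaFn hm hn
  have h1 := Real.Gamma_pos_of_pos hm
  have h2 := Real.Gamma_pos_of_pos hn
  have h3 := Real.Gamma_pos_of_pos (by linarith : 0 < m + n)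
  nlinarith [mul_pos h1 h2]

lemma beta_integrand_integrableOn {m n : ℝ} (hm : 0 < m) (hn : 0 < n) :
    IntegrableOn (fun x : ℝ => x ^ (m - 1) * (1 - x) ^ (n - 1)) (Set.Ioc 0 1) volume := by
  have hC := Complex.betaIntegral_convergent (u := (m:ℂ)) (v := (n:ℂ))
    (by simpa using hm) (by simpa using hn)
  have hC' : IntegrableOn (fun x : ℝ => (x:ℂ) ^ ((m:ℂ) - 1) * (1 - (x:ℂ)) ^ ((n:ℂ) - 1))
      (Set.Ioc 0 1) volume :=
    (intervalIntegrable_iff_integrableOn_Ioc_of_le (by norm_num)).mp hC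
  have hre : IntegrableOn (fun x : ℝ => ((x:ℂ) ^ ((m:ℂ) - 1) * (1 - (x:ℂ)) ^ ((n:ℂ) - 1)).re)
      (Set.Ioc 0 1) volume := hC'.re
  apply hre.congr_fun ?_ measurableSet_Ioc
  intro x hx
  have h := beta_integrand_cast (m := m) (n := n) hx.1.le hx.2
  simp only [← h, Complex.ofReal_re]


lemma step8 {a v : ℝ} (ha : 0 < a) (hv0 : 0 < v) (hv1 : v < 1) :
    ∫⁻ x in Set.Ico v 1, ENNReal.ofReal (x ^ ((1:ℝ)/2 - 1) * (1-x) ^ (a-1))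
      = ENNReal.ofReal (betaFn (1/2) a
          - ∫ x in (0:ℝ)..v, x ^ ((1:ℝ)/2-1) * (1-x)^(a-1)) := by
  set I : ℝ → ℝ := fun x => x ^ ((1:ℝ)/2 - 1) * (1-x) ^ (a-1) with hI
  have hInt : IntegrableOn I (Set.Ioc 0 1) volume :=
    beta_integrand_integrableOn (by norm_num) ha
  have hsub : Set.Ico v 1 ⊆ Set.Ioc 0 1 := fun x hx => ⟨lt_of_lt_of_le hv0 hx.1, hx.2.le⟩
  have hIco : IntegrableOn I (Set.Ico v 1) volume := hInt.mono_set hsub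
  have hnn : 0 ≤ᵐ[volume.restrict (Set.Ico v 1)] I := by
    filter_upwards [ae_restrict_mem measurableSet_Ico] with x hx
    have hx0 : 0 < x := lt_of_lt_of_le hv0 hx.1
    exact mul_nonneg (Real.rpow_nonneg hx0.le _)
      (Real.rpow_nonneg (by linarith [hx.2] : (0:ℝ) ≤ 1 - x) _)
  rw [← MeasureTheory.ofReal_integral_eq_lintegral_ofReal hIco hnn]
  congr 1
  have hBeta : betaFn (1/2) a = ∫ x in Set.Ioo (0:ℝ) 1, I x := by
    rw [betaFn, intervalIntegral.integral_of_le (by norm_num : (0:ℝ) ≤ 1),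
      integral_Ioc_eq_integral_Ioo]
  have h0v : ∫ x in (0:ℝ)..v, I x = ∫ x in Set.Ioc (0:ℝ) v, I x :=
    intervalIntegral.integral_of_le hv0.le
  have hunion : Set.Ioc (0:ℝ) v ∪ Set.Ioo v 1 = Set.Ioo 0 1 :=
    Set.Ioc_union_Ioo_eq_Ioo hv0.le hv1
  have hdisj : Disjoint (Set.Ioc (0:ℝ) v) (Set.Ioo v 1) := by
    apply Set.disjoint_left.mpr
    rintro x hx1 hx2
    exact absurd hx1.2 (not_le.mpr hx2.1)
  have hsplit : ∫ x in Set.Ioo (0:ℝ) 1, I x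
      = (∫ x in Set.Ioc (0:ℝ) v, I x) + ∫ x in Set.Ioo v 1, I x := by
    rw [← hunion]
    exact setIntegral_union hdisj measurableSet_Ioo
      (hInt.mono_set (fun x hx => ⟨hx.1, hx.2.trans hv1.le⟩))
      (hInt.mono_set (fun x hx => ⟨lt_trans hv0 hx.1, hx.2.le⟩))
  rw [MeasureTheory.integral_Ico_eq_integral_Ioo, hBeta, hsplit, h0v]
  ring




lemma step1 {σ a b t : ℝ} (hσ : 0 < σ) (ha : 0 < a) (hb : 0 < b) (ht : 0 < t) :
    (halfNormalMeasure.prod (ProbabilityTheory.gammaMeasure a 1))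
        {p : ℝ × ℝ | (p.2 / (b * p.1 ^ 2)) ^ σ ≤ t}
      = ENNReal.ofReal (Real.Gamma a)⁻¹
          * ∫⁻ x in Set.Ioi (0:ℝ),
              ENNReal.ofReal (Real.sqrt (2/π) * Real.exp (-x^2/2))
                * ∫⁻ y in Set.Ioc (0:ℝ) ((b * t ^ (1/σ)) * x^2),
                    ENNReal.ofReal (y ^ (a-1) * Real.exp (-y)) := by
  set ν := ProbabilityTheory.gammaMeasure a 1 with hν
  haveI : IsProbabilityMeasure ν := ProbabilityTheory.isProbabilityMeasure_gammaMeasure ha one_pos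
  set S := {p : ℝ × ℝ | (p.2 / (b * p.1 ^ 2)) ^ σ ≤ t} with hSdef
  have hS : MeasurableSet S := by
    apply measurableSet_le _ measurable_const
    fun_prop
  have hνIic : ν (Set.Iic (0:ℝ)) = 0 := by
    rw [hν, ProbabilityTheory.gammaMeasure, withDensity_apply _ measurableSet_Iic]
    have hne : ∀ᵐ y ∂volume.restrict (Set.Iic (0:ℝ)), y ≠ (0:ℝ) := by
      refine ae_restrict_of_ae ?_
      rw [ae_iff]
      have : {y : ℝ | ¬ y ≠ 0} = {0} := by ext y; simp
      rw [this]
      exact Real.volume_singleton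
    have h0 : ∀ᵐ y ∂volume.restrict (Set.Iic (0:ℝ)), ProbabilityTheory.gammaPDF a 1 y = 0 := by
      filter_upwards [hne, ae_restrict_mem measurableSet_Iic] with y h1 h2
      exact ProbabilityTheory.gammaPDF_of_neg (lt_of_le_of_ne h2 h1)
    rw [lintegral_congr_ae h0, lintegral_zero]
  have hslice : ∀ x : ℝ, 0 < x → ν (Prod.mk x ⁻¹' S)
      = ENNReal.ofReal (Real.Gamma a)⁻¹
          * ∫⁻ y in Set.Ioc (0:ℝ) ((b * t ^ (1/σ)) * x^2),
              ENNReal.ofReal (y ^ (a-1) * Real.exp (-y)) := by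
    intro x hx
    have hbx : (0:ℝ) < b * x^2 := by positivity
    set T := Prod.mk x ⁻¹' S with hT
    have hTmeas : MeasurableSet T := hS.preimage (measurable_prodMk_left)
    have hTinter : T ∩ Set.Ioi 0 = Set.Ioc (0:ℝ) ((b * t ^ (1/σ)) * x^2) := by
      ext y
      simp only [Set.mem_inter_iff, Set.mem_Ioi, Set.mem_Ioc, hT, Set.mem_preimage,
        hSdef, Set.mem_setOf_eq]
      constructor
      · rintro ⟨hcond, hy⟩
        refine ⟨hy, ?_⟩
        rw [← Real.le_rpow_inv_iff_of_pos (by positivity) ht.le hσ, div_le_iff₀ hbx] at hcond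
        calc y ≤ t ^ σ⁻¹ * (b * x^2) := hcond
          _ = b * t ^ (1/σ) * x^2 := by rw [one_div]; ring
      · rintro ⟨hy, hcond⟩
        refine ⟨?_, hy⟩
        rw [← Real.le_rpow_inv_iff_of_pos (by positivity) ht.le hσ, div_le_iff₀ hbx]
        calc y ≤ b * t ^ (1/σ) * x^2 := hcond
          _ = t ^ σ⁻¹ * (b * x^2) := by rw [one_div]; ring
    have hdiff : ν (T \ Set.Ioi 0) = 0 :=
      measure_mono_null (fun y (hy : y ∈ T \ Set.Ioi 0) => show y ≤ 0 from not_lt.mp (show ¬ (0:ℝ) < y from hy.2)) hνIic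
    have : ν T = ν (T ∩ Set.Ioi 0) := by
      rw [← measure_inter_add_diff T measurableSet_Ioi, hdiff, add_zero]
    rw [this, hTinter, hν, ProbabilityTheory.gammaMeasure,
      withDensity_apply _ measurableSet_Ioc]
    rw [show ∫⁻ y in Set.Ioc (0:ℝ) ((b * t ^ (1/σ)) * x^2), ProbabilityTheory.gammaPDF a 1 y
        = ∫⁻ y in Set.Ioc (0:ℝ) ((b * t ^ (1/σ)) * x^2),
            ENNReal.ofReal (Real.Gamma a)⁻¹ * ENNReal.ofReal (y ^ (a-1) * Real.exp (-y)) from ?_,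
      lintegral_const_mul' _ _ ENNReal.ofReal_ne_top]
    apply setLIntegral_congr_fun measurableSet_Ioc
    intro y hy
    dsimp only
    rw [ProbabilityTheory.gammaPDF_of_nonneg hy.1.le,
      ← ENNReal.ofReal_mul (by positivity)]
    congr 1
    rw [Real.one_rpow, one_mul]
    field_simp
  have hhndmeas : Measurable (fun x : ℝ =>
      ENNReal.ofReal (if 0 < x then Real.sqrt (2 / π) * Real.exp (-x ^ 2 / 2) else 0)) := by
    apply Measurable.ennreal_ofReal
    apply Measurable.ite measurableSet_Ioi <;> fun_prop
  rw [Measure.prod_apply hS, halfNormalMeasure,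
    lintegral_withDensity_eq_lintegral_mul _ hhndmeas (measurable_measure_prodMk_left hS)]
  calc ∫⁻ x, ((fun x => ENNReal.ofReal
          (if 0 < x then Real.sqrt (2 / π) * Real.exp (-x ^ 2 / 2) else 0))
        * fun x => ν (Prod.mk x ⁻¹' S)) x
      = ∫⁻ x, (Set.Ioi (0:ℝ)).indicator
          (fun x => ENNReal.ofReal (Real.sqrt (2/π) * Real.exp (-x^2/2))
            * ν (Prod.mk x ⁻¹' S)) x := by
        apply lintegral_congr
        intro x
        rw [Set.indicator_apply]
        split_ifs with hx
        · have hx' : (0:ℝ) < x := hx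
          rw [Pi.mul_apply, if_pos hx']
        · have hx' : ¬ (0:ℝ) < x := by simpa using hx
          rw [Pi.mul_apply, if_neg hx', ENNReal.ofReal_zero, zero_mul]
    _ = ∫⁻ x in Set.Ioi (0:ℝ),
          ENNReal.ofReal (Real.sqrt (2/π) * Real.exp (-x^2/2)) * ν (Prod.mk x ⁻¹' S) := by
        rw [lintegral_indicator measurableSet_Ioi]
    _ = ∫⁻ x in Set.Ioi (0:ℝ), ENNReal.ofReal (Real.Gamma a)⁻¹
          * (ENNReal.ofReal (Real.sqrt (2/π) * Real.exp (-x^2/2))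
            * ∫⁻ y in Set.Ioc (0:ℝ) ((b * t ^ (1/σ)) * x^2),
                ENNReal.ofReal (y ^ (a-1) * Real.exp (-y))) := by
        apply setLIntegral_congr_fun measurableSet_Ioi
        intro x hx
        dsimp only
        rw [hslice x hx]
        ring
    _ = ENNReal.ofReal (Real.Gamma a)⁻¹
          * ∫⁻ x in Set.Ioi (0:ℝ),
              ENNReal.ofReal (Real.sqrt (2/π) * Real.exp (-x^2/2))
                * ∫⁻ y in Set.Ioc (0:ℝ) ((b * t ^ (1/σ)) * x^2),
                    ENNReal.ofReal (y ^ (a-1) * Real.exp (-y)) := by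
        rw [lintegral_const_mul' _ _ ENNReal.ofReal_ne_top]

end Aux

/-- half-normal stochastic representation of the GLMGA distribution. -/
theorem glmga_half_normal_representation (σ a b : ℝ) (hσ : 0 < σ) (ha : 0 < a)
    (hb : 0 < b) (t : ℝ) (ht : 0 < t) :
    (halfNormalMeasure.prod (ProbabilityTheory.gammaMeasure a 1))
        {p : ℝ × ℝ | (p.2 / (b * p.1 ^ 2)) ^ σ ≤ t}
      = ENNReal.ofReal
          (1 - regIncBeta (1 / 2) a (t ^ (-1 / σ) / (t ^ (-1 / σ) + 2 * b))) := by
  have hT : (0:ℝ) < t ^ (1/σ) := Real.rpow_pos_of_pos ht _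
  have hcpos : 0 < b * t ^ (1/σ) := mul_pos hb hT
  have hqpos : 0 < 1 / (2 * (b * t ^ (1/σ))) := by positivity
  have h1q : (0:ℝ) < 1 + 1 / (2 * (b * t ^ (1/σ))) := by linarith
  have hvlt : 1 / (1 + 1 / (2 * (b * t ^ (1/σ)))) < 1 := by
    rw [div_lt_one h1q]; linarith
  have hvgt : 0 < 1 / (1 + 1 / (2 * (b * t ^ (1/σ)))) := by positivity
  have hv0 : 0 < 1 - 1 / (1 + 1 / (2 * (b * t ^ (1/σ)))) := by linarith
  have hv1 : 1 - 1 / (1 + 1 / (2 * (b * t ^ (1/σ)))) < 1 := by linarith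
  have hvt : t ^ (-1 / σ) / (t ^ (-1 / σ) + 2 * b)
      = 1 - 1 / (1 + 1 / (2 * (b * t ^ (1/σ)))) := by
    rw [neg_div, Real.rpow_neg ht.le]
    rw [one_div σ]
    field_simp
    ring
  have h2 := step2 (c := b * t ^ (1/σ))
    (fun z => ∫⁻ y in Set.Ioc (0:ℝ) z, ENNReal.ofReal (y ^ (a-1) * Real.exp (-y)))
  beta_reduce at h2
  rw [step1 hσ ha hb ht, h2, step3 ha hcpos]
  rw [step456 ha hqpos, step78 hqpos, step8 ha hv0 hv1]
  -- combine constants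
  have hGa := Real.Gamma_pos_of_pos ha
  have hGp := Real.Gamma_pos_of_pos (show (0:ℝ) < a + 1/2 by linarith)
  have hsπ : (0:ℝ) < Real.sqrt π := Real.sqrt_pos.mpr Real.pi_pos
  have hB : (0:ℝ) < betaFn (1/2) a := betaFn_pos (by norm_num) ha
  have hrel : Real.sqrt π * Real.Gamma a = Real.Gamma (a + 1/2) * betaFn (1/2) a := by
    have := Gamma_mul_Gamma_eq_betaFn (show (0:ℝ) < 1/2 by norm_num) ha
    rw [Real.Gamma_one_half_eq] at this
    rw [this, show (1:ℝ)/2 + a = a + 1/2 by ring]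
  rw [← ENNReal.ofReal_mul (by positivity), ← ENNReal.ofReal_mul (by positivity),
    ← ENNReal.ofReal_mul (by positivity)]
  rw [regIncBeta, hvt]
  congr 1
  have key : ∀ X : ℝ, (Real.Gamma a)⁻¹ * ((Real.sqrt π)⁻¹
        * (Real.Gamma (a+1/2) * (betaFn (1/2) a - X)))
      = 1 - X / betaFn (1/2) a := by
    intro X
    have hGval : Real.Gamma (a+1/2) = Real.sqrt π * Real.Gamma a / betaFn (1/2) a := by
      rw [eq_div_iff hB.ne']; linarith
    rw [hGval]
    field_simp
  exact key _
end

section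
/- Limiting density of the GLMGA distribution as a → ∞: for all σ > 0, φ > 0 and every fixed y > 0, setting b = b(a) = (a/2)·φ^{1/σ}, one has lim_{a→∞} f_{σ,a,b(a)}(y) = 1/( σ·√π·φ^{1/(2σ)} ) · y^{-1/(2σ) − 1} · exp( −(φ·y)^{-1/σ} ), the density of the generalized inverse gamma distribution with shape parameters 1/2 and 1/σ and scale parameter φ. -/
open MeasureTheory Real Filter Topology

lemma betaFn_eq {a : ℝ} (ha : 0 < a) :
    betaFn a (1/2) = Real.Gamma a * Real.sqrt π / Real.Gamma (a + 1/2) := by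
  have h1 : Complex.betaIntegral (a : ℂ) (1/2 : ℂ) = (betaFn a (1/2) : ℂ) := by
    rw [Complex.betaIntegral, betaFn, ← intervalIntegral.integral_ofReal]
    apply intervalIntegral.integral_congr
    intro x hx
    rw [Set.uIcc_of_le (by norm_num : (0:ℝ) ≤ 1)] at hx
    have h1x : (0:ℝ) ≤ 1 - x := by linarith [hx.2]
    beta_reduce
    rw [show ((a:ℂ) - 1) = ((a - 1 : ℝ) : ℂ) by push_cast; ring,
      show ((1:ℂ)/2 - 1) = (((1:ℝ)/2 - 1 : ℝ) : ℂ) by push_cast; ring,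
      show ((1:ℂ) - (x:ℂ)) = ((1 - x : ℝ) : ℂ) by push_cast; ring,
      ← Complex.ofReal_cpow hx.1, ← Complex.ofReal_cpow h1x]
    push_cast
    ring
  have h2 := Complex.Gamma_mul_Gamma_eq_betaIntegral
      (s := (a : ℂ)) (t := (1/2 : ℂ)) (by simpa using ha) (by norm_num)
  rw [h1] at h2
  have h3 : ((a : ℂ) + (1/2 : ℂ)) = ((a + 1/2 : ℝ) : ℂ) := by push_cast; ring
  have h3' : ((1:ℂ)/2) = (((1:ℝ)/2 : ℝ) : ℂ) := by norm_num
  rw [h3, h3', Complex.Gamma_ofReal, Complex.Gamma_ofReal, Complex.Gamma_ofReal] at h2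
  have h4 : Real.Gamma a * Real.Gamma (1/2) = Real.Gamma (a + 1/2) * betaFn a (1/2) := by
    exact_mod_cast h2
  have h5 : Real.Gamma (a + 1/2) ≠ 0 := (Real.Gamma_pos_of_pos (by linarith)).ne'
  rw [Real.Gamma_one_half_eq] at h4
  rw [eq_div_iff h5]
  linarith [h4]

lemma gamma_mid_le {x y : ℝ} (hx : 0 < x) (hy : 0 < y) :
    Real.Gamma ((x + y)/2) ≤ Real.sqrt (Real.Gamma x * Real.Gamma y) := by
  have h := Real.convexOn_log_Gamma.2 (Set.mem_Ioi.2 hx) (Set.mem_Ioi.2 hy)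
      (by norm_num : (0:ℝ) ≤ 1/2) (by norm_num : (0:ℝ) ≤ 1/2) (by norm_num)
  simp only [Function.comp, smul_eq_mul] at h
  have hgx := Real.Gamma_pos_of_pos hx
  have hgy := Real.Gamma_pos_of_pos hy
  have hmid : (1:ℝ)/2 * x + 1/2 * y = (x + y)/2 := by ring
  rw [hmid] at h
  have h2 : 1/2 * Real.log (Real.Gamma x) + 1/2 * Real.log (Real.Gamma y)
      = Real.log (Real.sqrt (Real.Gamma x * Real.Gamma y)) := by
    rw [Real.log_sqrt (by positivity), Real.log_mul hgx.ne' hgy.ne']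
    ring
  rw [h2] at h
  have := Real.exp_le_exp.2 h
  rwa [Real.exp_log (Real.Gamma_pos_of_pos (by linarith)),
    Real.exp_log (Real.sqrt_pos.2 (by positivity))] at this

lemma tendsto_ratio : Tendsto (fun a : ℝ => Real.sqrt a * Real.Gamma a / Real.Gamma (a + 1/2))
    atTop (𝓝 1) := by
  have hub : ∀ᶠ a : ℝ in atTop,
      Real.sqrt a * Real.Gamma a / Real.Gamma (a + 1/2) ≤ Real.sqrt (1 + 1/(2*a)) := by
    filter_upwards [eventually_ge_atTop (1:ℝ)] with a ha
    have ha0 : (0:ℝ) < a := by linarith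
    have hg : 0 < Real.Gamma a := Real.Gamma_pos_of_pos ha0
    have hgh : 0 < Real.Gamma (a + 1/2) := Real.Gamma_pos_of_pos (by linarith)
    have h1 := gamma_mid_le (x := a + 1/2) (y := a + 3/2) (by linarith) (by linarith)
    rw [show ((a+1/2) + (a+3/2))/2 = a + 1 by ring,
      show (a:ℝ) + 3/2 = (a + 1/2) + 1 by ring,
      Real.Gamma_add_one (by linarith : (a:ℝ)+1/2 ≠ 0),
      Real.Gamma_add_one ha0.ne'] at h1
    have h1' : a * Real.Gamma a ≤ Real.Gamma (a + 1/2) * Real.sqrt (a + 1/2) := by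
      calc a * Real.Gamma a ≤ Real.sqrt (Real.Gamma (a+1/2) * ((a+1/2) * Real.Gamma (a+1/2))) := h1
        _ = Real.Gamma (a + 1/2) * Real.sqrt (a + 1/2) := by
            rw [show Real.Gamma (a+1/2) * ((a+1/2) * Real.Gamma (a+1/2))
                = (Real.Gamma (a+1/2))^2 * (a+1/2) by ring,
              Real.sqrt_mul (by positivity), Real.sqrt_sq hgh.le]
    rw [div_le_iff₀ hgh]
    calc Real.sqrt a * Real.Gamma a = Real.sqrt a / a * (a * Real.Gamma a) := by
          field_simp
      _ ≤ Real.sqrt a / a * (Real.Gamma (a + 1/2) * Real.sqrt (a + 1/2)) := by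
          apply mul_le_mul_of_nonneg_left h1' (by positivity)
      _ = Real.sqrt (1 + 1/(2*a)) * Real.Gamma (a + 1/2) := by
          rw [show (1:ℝ) + 1/(2*a) = (a + 1/2)/a by field_simp,
            Real.sqrt_div (by linarith : (0:ℝ) ≤ a + 1/2), Real.sqrt_div_self']
          have hsa : Real.sqrt a ≠ 0 := by positivity
          field_simp
  have hlb : ∀ᶠ a : ℝ in atTop,
      (1:ℝ) ≤ Real.sqrt a * Real.Gamma a / Real.Gamma (a + 1/2) := by
    filter_upwards [eventually_ge_atTop (1:ℝ)] with a ha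
    have ha0 : (0:ℝ) < a := by linarith
    have hg : 0 < Real.Gamma a := Real.Gamma_pos_of_pos ha0
    have hgh : 0 < Real.Gamma (a + 1/2) := Real.Gamma_pos_of_pos (by linarith)
    have h1 := gamma_mid_le (x := a) (y := a + 1) ha0 (by linarith)
    rw [show (a + (a+1))/2 = a + 1/2 by ring, Real.Gamma_add_one ha0.ne'] at h1
    have h1' : Real.Gamma (a + 1/2) ≤ Real.sqrt a * Real.Gamma a := by
      calc Real.Gamma (a + 1/2) ≤ Real.sqrt (Real.Gamma a * (a * Real.Gamma a)) := h1
        _ = Real.sqrt a * Real.Gamma a := by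
            rw [show Real.Gamma a * (a * Real.Gamma a) = (Real.Gamma a)^2 * a by ring,
              Real.sqrt_mul (by positivity), Real.sqrt_sq hg.le]
            ring
    rw [le_div_iff₀ hgh]
    linarith
  have hub1 : Tendsto (fun a : ℝ => Real.sqrt (1 + 1/(2*a))) atTop (𝓝 1) := by
    have h0 : Tendsto (fun a : ℝ => 1 + 1/(2*a)) atTop (𝓝 1) := by
      have h1 : Tendsto (fun a : ℝ => 1/(2*a)) atTop (𝓝 0) := by
        simp only [one_div]
        exact tendsto_inv_atTop_zero.comp (tendsto_id.const_mul_atTop two_pos)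
      simpa using tendsto_const_nhds.add h1
    have := (Real.continuous_sqrt.tendsto 1).comp h0
    simpa [Function.comp_def] using this
  exact tendsto_of_tendsto_of_tendsto_of_le_of_le' tendsto_const_nhds hub1 hlb hub

lemma tendsto_aux (t : ℝ) (ht : 0 ≤ t) :
    Tendsto (fun a : ℝ => (1 + t/a) ^ (-(a + 1/2))) atTop (𝓝 (Real.exp (-t))) := by
  have h0 : Tendsto (fun a : ℝ => t/a) atTop (𝓝 0) :=
    tendsto_const_nhds.div_atTop tendsto_id
  have hbase : Tendsto (fun a : ℝ => 1 + t/a) atTop (𝓝 1) := by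
    simpa using (tendsto_const_nhds (x := (1:ℝ)) (f := atTop)).add h0
  have hA := tendsto_one_add_div_rpow_exp t
  have hB : Tendsto (fun a : ℝ => (1 + t/a) ^ ((1:ℝ)/2)) atTop (𝓝 1) := by
    have := hbase.rpow_const (p := (1:ℝ)/2) (Or.inl one_ne_zero)
    simpa using this
  have hC : Tendsto (fun a : ℝ => ((1 + t/a) ^ a * (1 + t/a) ^ ((1:ℝ)/2))⁻¹) atTop
      (𝓝 (Real.exp t * 1)⁻¹) := (hA.mul hB).inv₀ (by positivity)
  have hval : (Real.exp t * 1)⁻¹ = Real.exp (-t) := by simp [Real.exp_neg]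
  rw [hval] at hC
  apply hC.congr'
  filter_upwards [eventually_ge_atTop (1:ℝ)] with a ha
  have ha0 : (0:ℝ) < a := by linarith
  have hpos : 0 < 1 + t/a := by positivity
  rw [Real.rpow_neg hpos.le, Real.rpow_add hpos]

/-- limiting density of the GLMGA distribution as `a → ∞`. -/
theorem glmga_limit_density (σ φ y : ℝ) (hσ : 0 < σ) (hφ : 0 < φ) (hy : 0 < y) :
    Tendsto (fun a : ℝ => glmga σ a (a / 2 * φ ^ (1 / σ)) y) atTop
      (𝓝 (1 / (σ * Real.sqrt π * φ ^ (1 / (2 * σ))) * y ^ (-(1 / (2 * σ)) - 1) *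
        Real.exp (-(φ * y) ^ (-1 / σ)))) := by
  set p : ℝ := φ ^ (1/σ) with hp_def
  have hp : 0 < p := Real.rpow_pos_of_pos hφ _
  set c : ℝ := y ^ (-1/σ) with hc_def
  have hc : 0 < c := Real.rpow_pos_of_pos hy _
  set t : ℝ := c / p with ht_def
  have ht : 0 < t := div_pos hc hp
  set C : ℝ := y ^ (-(1 / (2 * σ) + 1)) with hC_def
  have hsπ : (0:ℝ) < Real.sqrt π := Real.sqrt_pos.2 Real.pi_pos
  -- limit of 1/(√a * B(a,1/2))
  have hT1 : Tendsto (fun a : ℝ => Real.sqrt a * betaFn a (1/2)) atTop (𝓝 (Real.sqrt π)) := by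
    have h := (tendsto_const_nhds (x := Real.sqrt π) (f := atTop (α := ℝ))).mul tendsto_ratio
    rw [mul_one] at h
    apply h.congr'
    filter_upwards [eventually_gt_atTop (0:ℝ)] with a ha0
    have hgh : 0 < Real.Gamma (a + 1/2) := Real.Gamma_pos_of_pos (by linarith)
    rw [betaFn_eq ha0]
    field_simp
  have hT1' : Tendsto (fun a : ℝ => (Real.sqrt a * betaFn a (1/2))⁻¹) atTop
      (𝓝 (Real.sqrt π)⁻¹) := hT1.inv₀ hsπ.ne'
  have hT2 := tendsto_aux t ht.le
  -- the limit of the auxiliary expression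
  have hF : Tendsto (fun a : ℝ => C/σ * (Real.sqrt a * betaFn a (1/2))⁻¹ * p ^ (-(1/2) : ℝ)
      * (1 + t/a) ^ (-(a + 1/2))) atTop
      (𝓝 (C/σ * (Real.sqrt π)⁻¹ * p ^ (-(1/2) : ℝ) * Real.exp (-t))) := by
    exact ((tendsto_const_nhds.mul hT1').mul tendsto_const_nhds).mul hT2
  -- identify the limit value
  have hval : C/σ * (Real.sqrt π)⁻¹ * p ^ (-(1/2) : ℝ) * Real.exp (-t)
      = 1 / (σ * Real.sqrt π * φ ^ (1 / (2 * σ))) * y ^ (-(1 / (2 * σ)) - 1) *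
        Real.exp (-(φ * y) ^ (-1 / σ)) := by
    have e1 : (φ * y) ^ (-1/σ) = t := by
      rw [ht_def, hc_def, hp_def, show (-1/σ) = -(1/σ) by ring,
        Real.mul_rpow hφ.le hy.le, Real.rpow_neg hφ.le, div_eq_mul_inv]
      ring
    have e2 : p ^ (-(1/2) : ℝ) = (φ ^ (1 / (2*σ)))⁻¹ := by
      rw [hp_def, ← Real.rpow_mul hφ.le,
        show (1/σ) * (-(1/2):ℝ) = -(1/(2*σ)) by field_simp,
        Real.rpow_neg hφ.le]
    have e3 : y ^ (-(1 / (2 * σ)) - 1) = C := by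
      rw [hC_def]; congr 1; ring
    rw [e1, e2, ← e3]
    have hφσ : (0:ℝ) < φ ^ (1/(2*σ)) := Real.rpow_pos_of_pos hφ _
    field_simp
  rw [← hval]
  -- eventual equality of glmga with the auxiliary expression
  apply hF.congr'
  filter_upwards [eventually_ge_atTop (1:ℝ)] with a ha
  have ha0 : (0:ℝ) < a := by linarith
  have hA : 0 < a * p := mul_pos ha0 hp
  have hD : 0 < c + a * p := by positivity
  have hgh : 0 < Real.Gamma (a + 1/2) := Real.Gamma_pos_of_pos (by linarith)
  have hg : 0 < Real.Gamma a := Real.Gamma_pos_of_pos ha0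
  have hB : 0 < betaFn a (1/2) := by rw [betaFn_eq ha0]; positivity
  have h2b : 2 * (a/2*p) = a * p := by ring
  have hbase : 1 + t/a = (c + a*p)/(a*p) := by
    rw [ht_def]; field_simp; ring
  rw [glmga, h2b, ← hc_def, ← hC_def, hbase,
    Real.rpow_neg (by positivity : (0:ℝ) ≤ (c + a*p)/(a*p)),
    Real.div_rpow hD.le hA.le,
    show (a*p) ^ (a + 1/2) = (a*p) ^ a * (a ^ ((1:ℝ)/2) * p ^ ((1:ℝ)/2)) by
      rw [Real.rpow_add hA, Real.mul_rpow ha0.le hp.le, Real.mul_rpow ha0.le hp.le],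
    Real.sqrt_eq_rpow, Real.rpow_neg hp.le]
  have h1 : (0:ℝ) < (a*p) ^ a := Real.rpow_pos_of_pos hA _
  have h2 : (0:ℝ) < (c + a*p) ^ (a + 1/2) := Real.rpow_pos_of_pos hD _
  have h3 : (0:ℝ) < a ^ ((1:ℝ)/2) := Real.rpow_pos_of_pos ha0 _
  have h4 : (0:ℝ) < p ^ ((1:ℝ)/2) := Real.rpow_pos_of_pos hp _
  field_simp
end

section
/- Moments of the generalized log-Moyal distribution: for all θ > 0, σ > 0 and every real r > 0 with rσ < 1/2, ∫_0^∞ y^r · [ √θ/(√(2π)·σ) · y^{-(1/(2σ)+1)} · exp(−(θ/2)·y^{-1/σ}) ] dy = (θ/2)^{rσ} · Γ(1/2 − rσ)/Γ(1/2). -/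
open MeasureTheory Real Filter Topology

/-- moments of the generalized log-Moyal distribution. -/
theorem glogM_moment (θ σ r : ℝ) (hθ : 0 < θ) (hσ : 0 < σ) (hr : 0 < r)
    (hrσ : r * σ < 1 / 2) :
    ∫ y in Set.Ioi (0:ℝ),
        y ^ r * (Real.sqrt θ / (Real.sqrt (2 * π) * σ) * y ^ (-(1 / (2 * σ) + 1)) *
          Real.exp (-(θ / 2) * y ^ (-1 / σ)))
      = (θ / 2) ^ (r * σ) * Real.Gamma (1 / 2 - r * σ) / Real.Gamma (1 / 2) := by
  have hσne : (-σ : ℝ) ≠ 0 := by simpa using hσ.ne'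
  rw [← MeasureTheory.integral_comp_rpow_Ioi
      (fun y : ℝ => y ^ r * (Real.sqrt θ / (Real.sqrt (2 * π) * σ) * y ^ (-(1 / (2 * σ) + 1)) *
        Real.exp (-(θ / 2) * y ^ (-1 / σ)))) hσne]
  have key : ∀ x ∈ Set.Ioi (0:ℝ),
      (|(-σ)| * x ^ ((-σ) - 1)) • ((fun y : ℝ => y ^ r *
        (Real.sqrt θ / (Real.sqrt (2 * π) * σ) * y ^ (-(1 / (2 * σ) + 1)) *
        Real.exp (-(θ / 2) * y ^ (-1 / σ)))) (x ^ (-σ)))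
      = (Real.sqrt θ / Real.sqrt (2 * π)) *
          (x ^ ((1 / 2 - r * σ) - 1) * Real.exp (-(θ / 2 * x))) := by
    intro x hx
    have hx0 : (0:ℝ) < x := hx
    have h1 : (x ^ (-σ)) ^ r = x ^ (-σ * r) := (Real.rpow_mul hx0.le _ _).symm
    have h2 : (x ^ (-σ)) ^ (-(1 / (2 * σ) + 1)) = x ^ (-σ * (-(1 / (2 * σ) + 1))) :=
      (Real.rpow_mul hx0.le _ _).symm
    have h3 : (x ^ (-σ)) ^ (-1 / σ) = x := by
      rw [← Real.rpow_mul hx0.le]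
      rw [show -σ * (-1 / σ) = 1 by field_simp]
      exact Real.rpow_one x
    rw [smul_eq_mul]
    simp only [h1, h2, h3]
    rw [abs_of_neg (neg_lt_zero.mpr hσ), neg_neg]
    rw [show -σ * (-(1 / (2 * σ) + 1)) = 1 / 2 + σ by field_simp]
    rw [show (1 / 2 - r * σ) - 1 = ((-σ) - 1) + (-σ * r) + (1 / 2 + σ) by ring]
    rw [Real.rpow_add hx0, Real.rpow_add hx0, neg_mul (θ/2) x]
    field_simp
    rw [show ((1:ℝ) + σ * 2) / 2 = 1 / 2 + σ by ring, Real.rpow_add hx0 (1/2) σ,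
      Real.rpow_add hx0 (-σ - 1) (-(σ * r))]
    ring
  rw [setIntegral_congr_fun measurableSet_Ioi key, MeasureTheory.integral_const_mul,
    integral_rpow_mul_exp_neg_mul_Ioi (by linarith) (by positivity)]
  have hπ : Real.Gamma (1 / 2) = Real.sqrt π := Real.Gamma_one_half_eq
  rw [hπ]
  have h2θ : (1 / (θ / 2)) ^ ((1:ℝ) / 2 - r * σ)
      = (θ / 2) ^ (r * σ) * (θ / 2) ^ (-((1:ℝ)/2)) := by
    rw [one_div, ← Real.rpow_neg_one, ← Real.rpow_mul (by positivity : (0:ℝ) ≤ θ/2),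
      show (-1:ℝ) * ((1:ℝ)/2 - r * σ) = r * σ + (-((1:ℝ)/2)) by ring,
      Real.rpow_add (by positivity)]
  have e1 : (θ / 2 : ℝ) ^ (-((1:ℝ)/2)) = Real.sqrt 2 / Real.sqrt θ := by
    rw [Real.rpow_neg (by positivity), ← Real.sqrt_eq_rpow, Real.sqrt_div hθ.le, inv_div]
  rw [h2θ, e1]
  rw [Real.sqrt_mul (by norm_num : (0:ℝ) ≤ 2) π]
  have h1 : Real.sqrt θ ≠ 0 := by positivity
  have h2 : Real.sqrt 2 ≠ 0 := by positivity
  have h3 : Real.sqrt π ≠ 0 := by positivity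
  field_simp
end
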